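/- Let λ be a strict partition and k ≥ 1. Then λ admits no removable k-ribbon (i.e., λ is a shifted k-core) if and only if all of the following hold: k is not a part of λ; for every part p of λ with p > k, p − k is also a part of λ; and no two distinct parts of λ sum to k. (The paper phrases this as: λ has no removable k-ribbon iff no cell of its shifted diagram has hook length k.) -/

import Mathlib

def IsStrictPartition (s : Finset ℕ) : Prop := ∀ x ∈ s, 0 < x

/-- The `i`-th largest part of `s` (1-indexed); `0` if out of range. -/
def nthPart (s : Finset ℕ) (i : ℕ) : ℕ := (s.sort (· ≤ ·)).reverse.getD (i - 1) 0

/-- The shifted diagram: row `i` (1-indexed) has cells `(i, j)` with `i ≤ j ≤ i + λᵢ - 1`. -/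
def shiftedDiagram (s : Finset ℕ) : Set (ℕ × ℕ) :=
  {c | 1 ≤ c.1 ∧ c.1 ≤ c.2 ∧ c.2 + 1 ≤ c.1 + nthPart s c.1}

def skewDiag (lam nu : Finset ℕ) : Set (ℕ × ℕ) := shiftedDiagram lam \ shiftedDiagram nu

/-- Diagonal value `j - i + 1` of a cell `(i, j)`. -/
def diagVal (c : ℕ × ℕ) : ℕ := c.2 + 1 - c.1

def CellAdj (c d : ℕ × ℕ) : Prop :=
  (c.1 = d.1 ∧ (c.2 + 1 = d.2 ∨ d.2 + 1 = c.2)) ∨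
  (c.2 = d.2 ∧ (c.1 + 1 = d.1 ∨ d.1 + 1 = c.1))

def EdgeConnected (S : Set (ℕ × ℕ)) : Prop :=
  ∀ c ∈ S, ∀ d ∈ S, Relation.ReflTransGen (fun x y => CellAdj x y ∧ x ∈ S ∧ y ∈ S) c d

def IsHead (S : Set (ℕ × ℕ)) (c : ℕ × ℕ) : Prop :=
  c ∈ S ∧ ∀ d ∈ S, diagVal d ≤ diagVal c

def IsTail (S : Set (ℕ × ℕ)) (c : ℕ × ℕ) : Prop :=
  c ∈ S ∧ ∀ d ∈ S, diagVal c ≤ diagVal d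

def IsRemovableSingleRibbon (lam nu : Finset ℕ) (k : ℕ) : Prop :=
  IsStrictPartition lam ∧ IsStrictPartition nu ∧
  shiftedDiagram nu ⊆ shiftedDiagram lam ∧
  (skewDiag lam nu).ncard = k ∧
  EdgeConnected (skewDiag lam nu) ∧
  Set.InjOn diagVal (skewDiag lam nu)

def IsDoubleDecomp (lam nu : Finset ℕ) (R S : Set (ℕ × ℕ)) : Prop :=
  IsStrictPartition lam ∧ IsStrictPartition nu ∧
  shiftedDiagram nu ⊆ shiftedDiagram lam ∧
  Disjoint R S ∧ R ∪ S = skewDiag lam nu ∧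
  R.Nonempty ∧ EdgeConnected R ∧ Set.InjOn diagVal R ∧
  S.Nonempty ∧ EdgeConnected S ∧ Set.InjOn diagVal S ∧
  S.ncard ≤ R.ncard ∧
  (∃ a, IsTail R (a, a)) ∧ (∃ b, IsTail S (b, b)) ∧
  (∃ mu : Finset ℕ, IsStrictPartition mu ∧ shiftedDiagram mu = shiftedDiagram lam \ R)

def IsRemovableDoubleRibbon (lam nu : Finset ℕ) (k : ℕ) : Prop :=
  (skewDiag lam nu).ncard = k ∧ ∃ R S, IsDoubleDecomp lam nu R S

def IsRemovableRibbon (lam nu : Finset ℕ) (k : ℕ) : Prop :=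
  IsRemovableSingleRibbon lam nu k ∨ IsRemovableDoubleRibbon lam nu k

namespace S4

lemma sorted_getD_iff (r : List ℕ) (hr : r.Pairwise (· ≥ ·)) (i v : ℕ) (hv : 1 ≤ v) :
    v ≤ r.getD i 0 ↔ i + 1 ≤ r.countP (fun x => decide (v ≤ x)) := by
  induction r generalizing i with
  | nil => simp [List.getD]; omega
  | cons a t ih =>
    have ht : t.Pairwise (· ≥ ·) := hr.of_cons
    have hall : ∀ x ∈ t, x ≤ a := fun x hx => List.rel_of_pairwise_cons hr hx
    rw [List.countP_cons]
    by_cases hva : v ≤ a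
    · simp only [hva, decide_eq_true_eq, if_pos]
      cases i with
      | zero => simp only [List.getD_cons_zero]; omega
      | succ n =>
        have := ih ht n
        simp only [List.getD_cons_succ]
        rw [this]
        omega
    · have hzero : t.countP (fun x => decide (v ≤ x)) = 0 := by
        rw [List.countP_eq_zero]
        intro x hx
        simp only [decide_eq_true_eq]
        exact fun h => hva (le_trans h (hall x hx))
      simp only [decide_eq_true_eq, if_neg hva, hzero]
      constructor
      · intro h
        exfalso
        cases i with
        | zero => exact hva (by simpa using h)
        | succ n =>
          simp only [List.getD_cons_succ] at h
          rcases Nat.lt_or_ge n t.length with hn | hn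
          · have : t.getD n 0 ∈ t := by
              rw [List.getD_eq_getElem _ _ hn]; exact List.getElem_mem _
            exact hva (le_trans h (le_trans (hall _ this) le_rfl))
          · rw [List.getD_eq_default _ _ hn] at h; omega
      · omega

lemma le_nthPart_iff (s : Finset ℕ) (i v : ℕ) (hi : 1 ≤ i) (hv : 1 ≤ v) :
    v ≤ nthPart s i ↔ i ≤ (s.filter (fun x => v ≤ x)).card := by
  have hr : (s.sort (· ≤ ·)).reverse.Pairwise (· ≥ ·) := by
    rw [List.pairwise_reverse]
    exact List.Pairwise.imp (fun h => h) (Finset.pairwise_sort s (· ≤ ·))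
  have hcount : (s.sort (· ≤ ·)).reverse.countP (fun x => decide (v ≤ x))
      = (s.filter (fun x => v ≤ x)).card := by
    rw [List.countP_reverse]
    rw [← Multiset.coe_countP (fun x => v ≤ x) (s.sort (· ≤ ·))]
    rw [Finset.sort_eq]
    rw [Multiset.countP_eq_card_filter]
    rfl
  rw [nthPart, sorted_getD_iff _ hr _ v hv, hcount]
  omega

/-- rank of v in s -/
def rk (s : Finset ℕ) (v : ℕ) : ℕ := (s.filter (fun x => v ≤ x)).card

lemma eq_of_le_iff {A B : ℕ} (h : ∀ v, 1 ≤ v → (v ≤ A ↔ v ≤ B)) : A = B := by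
  rcases Nat.eq_zero_or_pos A with hA | hA
  · rcases Nat.eq_zero_or_pos B with hB | hB
    · omega
    · have := (h B hB).mpr le_rfl; omega
  · rcases Nat.eq_zero_or_pos B with hB | hB
    · have := (h A hA).mp le_rfl; omega
    · have h1 := (h A hA).mp le_rfl
      have h2 := (h B hB).mpr le_rfl
      omega

lemma rk_mono (s : Finset ℕ) {v w : ℕ} (h : v ≤ w) : rk s w ≤ rk s v :=
  Finset.card_le_card (Finset.monotone_filter_right s (fun x _ hx => le_trans h hx))

lemma nthPart_antitone (s : Finset ℕ) {i j : ℕ} (hi : 1 ≤ i) (hij : i ≤ j) :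
    nthPart s j ≤ nthPart s i := by
  rcases Nat.eq_zero_or_pos (nthPart s j) with h | h
  · omega
  · exact (le_nthPart_iff s i _ hi h).mpr
      (le_trans hij ((le_nthPart_iff s j _ (by omega) h).mp le_rfl))

lemma rk_filter_succ (s : Finset ℕ) (v : ℕ) : rk s v ≤ rk s (v + 1) + 1 := by
  have : s.filter (fun x => v ≤ x) ⊆ insert v (s.filter (fun x => v + 1 ≤ x)) := by
    intro x hx
    simp only [Finset.mem_filter] at hx
    rcases Nat.eq_or_lt_of_le hx.2 with h | h
    · exact Finset.mem_insert.mpr (Or.inl h.symm)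
    · simp only [Finset.mem_insert, Finset.mem_filter]
      exact Or.inr ⟨hx.1, h⟩
  calc rk s v ≤ (insert v (s.filter (fun x => v + 1 ≤ x))).card := Finset.card_le_card this
    _ ≤ rk s (v + 1) + 1 := Finset.card_insert_le _ _

lemma nthPart_strictAnti (s : Finset ℕ) {i j : ℕ} (hi : 1 ≤ i) (hij : i < j)
    (hj : 0 < nthPart s j) : nthPart s j < nthPart s i := by
  set v := nthPart s j with hv
  have h1 : j ≤ (s.filter (fun x => v ≤ x)).card :=
    (le_nthPart_iff s j v (by omega) hj).mp le_rfl
  have h2 : (s.filter (fun x => v ≤ x)).card ≤ (s.filter (fun x => v + 1 ≤ x)).card + 1 :=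
    rk_filter_succ s v
  have h3 : v + 1 ≤ nthPart s i := (le_nthPart_iff s i (v + 1) hi (by omega)).mpr (by omega)
  omega

lemma nthPart_mem (s : Finset ℕ) {i : ℕ} (hi : 1 ≤ i) (h : 0 < nthPart s i) :
    nthPart s i ∈ s := by
  set v := nthPart s i with hv
  by_contra hmem
  have heq : s.filter (fun x => v ≤ x) = s.filter (fun x => v + 1 ≤ x) := by
    apply Finset.filter_congr
    intro x hx
    try simp only [eq_iff_iff]
    constructor
    · intro hle
      rcases Nat.eq_or_lt_of_le hle with h' | h'
      · exact absurd (h' ▸ hx) hmem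
      · exact h'
    · omega
  have h1 : i ≤ (s.filter (fun x => v ≤ x)).card := (le_nthPart_iff s i v hi h).mp le_rfl
  rw [heq] at h1
  have h2 := (le_nthPart_iff s i (v + 1) hi (by omega)).mpr h1
  omega

lemma mem_nthPart (s : Finset ℕ) {v : ℕ} (hv : 1 ≤ v) (hmem : v ∈ s) :
    1 ≤ rk s v ∧ rk s v ≤ s.card ∧ nthPart s (rk s v) = v := by
  have hpos : 1 ≤ rk s v :=
    Finset.card_pos.mpr ⟨v, Finset.mem_filter.mpr ⟨hmem, le_rfl⟩⟩
  have hcard : rk s v ≤ s.card := Finset.card_le_card (Finset.filter_subset _ _)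
  refine ⟨hpos, hcard, ?_⟩
  have hge : v ≤ nthPart s (rk s v) := (le_nthPart_iff s _ v hpos hv).mpr le_rfl
  have hlt : ¬ (v + 1 ≤ nthPart s (rk s v)) := by
    intro hcon
    have h1 : rk s v ≤ (s.filter (fun x => v + 1 ≤ x)).card :=
      (le_nthPart_iff s _ (v + 1) hpos (by omega)).mp hcon
    have h2 : (s.filter (fun x => v + 1 ≤ x)).card < rk s v := by
      apply Finset.card_lt_card
      rw [Finset.ssubset_iff_of_subset
        (Finset.monotone_filter_right s (fun x hx => by omega))]
      exact ⟨v, Finset.mem_filter.mpr ⟨hmem, le_rfl⟩, by simp⟩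
    omega
  omega

lemma nthPart_eq_zero (s : Finset ℕ) {i : ℕ} (h : s.card < i) : nthPart s i = 0 := by
  by_contra hne
  have hpos : 0 < nthPart s i := Nat.pos_of_ne_zero hne
  have h1 : i ≤ (s.filter (fun x => nthPart s i ≤ x)).card :=
    (le_nthPart_iff s i _ (by omega) hpos).mp le_rfl
  have h2 : (s.filter (fun x => nthPart s i ≤ x)).card ≤ s.card :=
    Finset.card_le_card (Finset.filter_subset _ _)
  omega

lemma nthPart_pos (s : Finset ℕ) (hs : IsStrictPartition s) {i : ℕ} (hi : 1 ≤ i)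
    (h : i ≤ s.card) : 0 < nthPart s i := by
  have h1 : (s.filter (fun x => 1 ≤ x)).card = s.card := by
    rw [Finset.filter_true_of_mem (fun x hx => Nat.one_le_iff_ne_zero.mpr
      (Nat.pos_iff_ne_zero.mp (hs x hx)))]
  exact (le_nthPart_iff s i 1 hi le_rfl).mpr (by omega)

lemma rk_lt_of_gt (s : Finset ℕ) {p v : ℕ} (hp : p ∈ s) (hpv : p < v) :
    rk s v < rk s p := by
  apply Finset.card_lt_card
  rw [Finset.ssubset_iff_of_subset
    (Finset.monotone_filter_right s (fun x hx => by omega))]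
  exact ⟨p, Finset.mem_filter.mpr ⟨hp, le_rfl⟩, by simp; omega⟩

lemma rk_succ_of_not_mem (s : Finset ℕ) {q : ℕ} (hq : q ∉ s) : rk s (q + 1) = rk s q := by
  unfold rk
  congr 1
  apply Finset.filter_congr
  intro x hx
  have : x ≠ q := fun h => hq (h ▸ hx)
  constructor <;> intro <;> omega

lemma filter_erase_card (s : Finset ℕ) (p v : ℕ) (hp : p ∈ s) :
    ((s.erase p).filter (fun x => v ≤ x)).card
      = if v ≤ p then rk s v - 1 else rk s v := by
  have h1 : (s.erase p).filter (fun x => v ≤ x) = (s.filter (fun x => v ≤ x)).erase p := by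
    ext x
    simp only [Finset.mem_filter, Finset.mem_erase]
    tauto
  rw [h1]
  by_cases hv : v ≤ p
  · rw [if_pos hv, Finset.card_erase_of_mem (Finset.mem_filter.mpr ⟨hp, hv⟩)]
    rfl
  · rw [if_neg hv,
      Finset.erase_eq_of_notMem (fun hmem => hv (Finset.mem_filter.mp hmem).2)]
    rfl

lemma filter_insert_card (s : Finset ℕ) (q v : ℕ) (hq : q ∉ s) :
    ((insert q s).filter (fun x => v ≤ x)).card
      = if v ≤ q then rk s v + 1 else rk s v := by
  rw [Finset.filter_insert]
  by_cases hv : v ≤ q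
  · rw [if_pos hv, if_pos hv, Finset.card_insert_of_notMem
      (fun h => hq (Finset.mem_filter.mp h).1)]
    rfl
  · rw [if_neg hv, if_neg hv]
    rfl

lemma nthPart_erase_lt (s : Finset ℕ) {p j : ℕ} (hp : p ∈ s) (hj : 1 ≤ j)
    (hlt : j < rk s p) : nthPart (s.erase p) j = nthPart s j := by
  apply eq_of_le_iff
  intro v hv
  rw [le_nthPart_iff (s.erase p) j v hj hv, le_nthPart_iff s j v hj hv,
    filter_erase_card s p v hp]
  by_cases hvp : v ≤ p
  · have := rk_mono s hvp
    rw [if_pos hvp]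
    unfold rk at *
    omega
  · rw [if_neg hvp]
    unfold rk
    rfl

lemma nthPart_erase_ge (s : Finset ℕ) {p j : ℕ} (hp : p ∈ s) (hp1 : 1 ≤ p)
    (hj : rk s p ≤ j) : nthPart (s.erase p) j = nthPart s (j + 1) := by
  have hrk1 : 1 ≤ rk s p := (mem_nthPart s hp1 hp).1
  apply eq_of_le_iff
  intro v hv
  rw [le_nthPart_iff (s.erase p) j v (by omega) hv, le_nthPart_iff s (j + 1) v (by omega) hv,
    filter_erase_card s p v hp]
  by_cases hvp : v ≤ p
  · have := rk_mono s hvp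
    rw [if_pos hvp]
    unfold rk at *
    omega
  · have := rk_lt_of_gt s hp (by omega : p < v)
    rw [if_neg hvp]
    unfold rk at *
    omega

lemma nthPart_insert_lt (s : Finset ℕ) {q j : ℕ} (hq : q ∉ s) (hj : 1 ≤ j)
    (hlt : j ≤ rk s q) : nthPart (insert q s) j = nthPart s j := by
  apply eq_of_le_iff
  intro v hv
  rw [le_nthPart_iff (insert q s) j v hj hv, le_nthPart_iff s j v hj hv,
    filter_insert_card s q v hq]
  by_cases hvq : v ≤ q
  · have := rk_mono s hvq
    rw [if_pos hvq]
    unfold rk at *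
    omega
  · rw [if_neg hvq]
    unfold rk
    rfl

lemma nthPart_insert_eq (s : Finset ℕ) {q : ℕ} (hq : q ∉ s) (hq1 : 1 ≤ q) :
    nthPart (insert q s) (rk s q + 1) = q := by
  have hmem := mem_nthPart (insert q s) hq1 (Finset.mem_insert_self q s)
  have hrk : rk (insert q s) q = rk s q + 1 := by
    have := filter_insert_card s q q hq
    rw [if_pos le_rfl] at this
    exact this
  rw [← hrk]
  exact hmem.2.2

lemma nthPart_insert_gt (s : Finset ℕ) {q j : ℕ} (hq : q ∉ s) (hq1 : 1 ≤ q)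
    (hgt : rk s q + 1 < j) : nthPart (insert q s) j = nthPart s (j - 1) := by
  apply eq_of_le_iff
  intro v hv
  rw [le_nthPart_iff (insert q s) j v (by omega) hv,
    le_nthPart_iff s (j - 1) v (by omega) hv, filter_insert_card s q v hq]
  by_cases hvq : v ≤ q
  · rw [if_pos hvq]
    have := rk_mono s hvq
    unfold rk at *
    omega
  · rw [if_neg hvq]
    have h1 : rk s v ≤ rk s (q + 1) := rk_mono s (by omega)
    have h2 : rk s (q + 1) = rk s q := rk_succ_of_not_mem s hq
    unfold rk at *
    omega

lemma mem_shifted (s : Finset ℕ) (i j : ℕ) :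
    (i, j) ∈ shiftedDiagram s ↔ 1 ≤ i ∧ i ≤ j ∧ j + 1 ≤ i + nthPart s i := Iff.rfl

lemma mem_skew (lam nu : Finset ℕ) (i j : ℕ) :
    (i, j) ∈ skewDiag lam nu ↔ 1 ≤ i ∧ i + nthPart nu i ≤ j ∧ j < i + nthPart lam i := by
  unfold skewDiag
  rw [Set.mem_diff, mem_shifted, mem_shifted]
  omega

lemma subset_diagram_of_le {lam nu : Finset ℕ}
    (h : ∀ i, 1 ≤ i → nthPart nu i ≤ nthPart lam i) :
    shiftedDiagram nu ⊆ shiftedDiagram lam := by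
  rintro ⟨i, j⟩ hc
  rw [mem_shifted] at hc ⊢
  have := h i hc.1
  omega

lemma le_of_subset_diagram {lam nu : Finset ℕ}
    (h : shiftedDiagram nu ⊆ shiftedDiagram lam) {i : ℕ} (hi : 1 ≤ i) :
    nthPart nu i ≤ nthPart lam i := by
  rcases Nat.eq_zero_or_pos (nthPart nu i) with h0 | h0
  · omega
  · have hmem : (i, i + nthPart nu i - 1) ∈ shiftedDiagram nu :=
      (mem_shifted nu i _).mpr ⟨hi, by omega, by omega⟩
    have h2 := (mem_shifted lam i _).mp (h hmem)
    omega

lemma shifted_finite (s : Finset ℕ) : (shiftedDiagram s).Finite := by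
  apply Set.Finite.subset
    ((Finset.Icc 1 (s.card + s.sum id) ×ˢ Finset.Icc 1 (s.card + s.sum id)).finite_toSet)
  rintro ⟨i, j⟩ hc
  rw [mem_shifted] at hc
  obtain ⟨h1, h2, h3⟩ := hc
  have hpos : 0 < nthPart s i := by omega
  have hic : i ≤ s.card := by
    by_contra hcon
    rw [nthPart_eq_zero s (by omega)] at hpos
    omega
  have hsum : nthPart s i ≤ s.sum id :=
    Finset.single_le_sum (f := id) (fun x _ => Nat.zero_le x) (nthPart_mem s h1 hpos)
  simp only [Finset.coe_product, Set.mem_prod, Finset.mem_coe, Finset.mem_Icc]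
  omega

lemma skew_finite (lam nu : Finset ℕ) : (skewDiag lam nu).Finite :=
  (shifted_finite lam).subset Set.diff_subset

/-- The structural data of a ribbon strip. -/
structure Strip (lam nu : Finset ℕ) (i₀ m : ℕ) : Prop where
  h1 : 1 ≤ i₀
  h2 : i₀ ≤ m
  hlt : ∀ j, 1 ≤ j → j < i₀ → nthPart nu j = nthPart lam j
  hgt : ∀ j, m < j → nthPart nu j = nthPart lam j
  hmid : ∀ j, i₀ ≤ j → j < m → nthPart nu j = nthPart lam (j + 1)
  hm : nthPart nu m < nthPart lam m

namespace Strip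

variable {lam nu : Finset ℕ} {i₀ m : ℕ}

lemma hLpos (hS : Strip lam nu i₀ m) : ∀ j, 1 ≤ j → j ≤ m → 0 < nthPart lam j := by
  intro j hj1 hjm
  have := nthPart_antitone lam hj1 hjm
  have := hS.hm
  omega

lemma hrow (hS : Strip lam nu i₀ m) : ∀ j, i₀ ≤ j → j ≤ m → nthPart nu j < nthPart lam j := by
  intro j hj1 hjm
  rcases Nat.eq_or_lt_of_le hjm with h | h
  · rw [h]; exact hS.hm
  · rw [hS.hmid j hj1 h]
    rcases Nat.eq_zero_or_pos (nthPart lam (j + 1)) with h0 | h0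
    · rw [h0]; exact hS.hLpos j (by have := hS.h1; omega) hjm
    · exact nthPart_strictAnti lam (by have := hS.h1; omega) (by omega) h0

lemma hle (hS : Strip lam nu i₀ m) : ∀ j, 1 ≤ j → nthPart nu j ≤ nthPart lam j := by
  intro j hj1
  rcases Nat.lt_or_ge j i₀ with h | h
  · rw [hS.hlt j hj1 h]
  · rcases le_or_gt j m with h' | h'
    · exact le_of_lt (hS.hrow j h h')
    · rw [hS.hgt j h']

lemma mem_skew_strip (hS : Strip lam nu i₀ m) (i j : ℕ) :
    (i, j) ∈ skewDiag lam nu ↔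
      i₀ ≤ i ∧ i ≤ m ∧ i + nthPart nu i ≤ j ∧ j < i + nthPart lam i := by
  rw [mem_skew]
  constructor
  · rintro ⟨h1, h2, h3⟩
    have hi0 : i₀ ≤ i := by
      by_contra hcon
      rw [hS.hlt i h1 (by omega)] at h2
      omega
    have him : i ≤ m := by
      by_contra hcon
      rw [hS.hgt i (by omega)] at h2
      omega
    exact ⟨hi0, him, h2, h3⟩
  · rintro ⟨h1, h2, h3, h4⟩
    exact ⟨by have := hS.h1; omega, h3, h4⟩

lemma strip_sets (hS : Strip lam nu i₀ m) : skewDiag lam nu =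
    ↑((Finset.Icc i₀ m).biUnion
      (fun r => {r} ×ˢ Finset.Ico (r + nthPart nu r) (r + nthPart lam r))) := by
  ext ⟨i, j⟩
  rw [Finset.mem_coe, Finset.mem_biUnion, hS.mem_skew_strip i j]
  constructor
  · rintro ⟨h1, h2, h3, h4⟩
    exact ⟨i, Finset.mem_Icc.mpr ⟨h1, h2⟩,
      Finset.mem_product.mpr ⟨Finset.mem_singleton_self i, Finset.mem_Ico.mpr ⟨h3, h4⟩⟩⟩
  · rintro ⟨r, hr, hmem⟩
    rw [Finset.mem_product, Finset.mem_singleton, Finset.mem_Ico] at hmem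
    rw [Finset.mem_Icc] at hr
    obtain ⟨rfl, h2⟩ := hmem
    exact ⟨hr.1, hr.2, h2.1, h2.2⟩

lemma telescope (L N : ℕ → ℕ) (i₀ : ℕ) : ∀ m, i₀ ≤ m →
    (∀ j, i₀ ≤ j → j < m → N j = L (j + 1)) →
    (∀ j, i₀ ≤ j → j ≤ m → N j ≤ L j) →
    (∑ r ∈ Finset.Icc i₀ m, (L r - N r) = L i₀ - N m ∧ N m ≤ L i₀) := by
  intro m hm
  induction m, hm using Nat.le_induction with
  | base =>
    intro _ hle
    rw [Finset.Icc_self, Finset.sum_singleton]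
    exact ⟨rfl, hle i₀ le_rfl le_rfl⟩
  | succ n hn ih =>
    intro hmid hle
    have hIH := ih (fun j hj hj' => hmid j hj (by omega))
      (fun j hj hj' => hle j hj (by omega))
    rw [Finset.sum_Icc_succ_top (by omega)]
    have e1 : N n = L (n + 1) := hmid n hn (by omega)
    have e2 : N (n + 1) ≤ L (n + 1) := hle (n + 1) (by omega) le_rfl
    omega

lemma strip_ncard (hS : Strip lam nu i₀ m) : (skewDiag lam nu).ncard = nthPart lam i₀ - nthPart nu m := by
  rw [hS.strip_sets, Set.ncard_coe_finset]
  rw [Finset.card_biUnion (by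
    intro x hx y hy hxy
    rw [Function.onFun, Finset.disjoint_left]
    rintro ⟨a1, a2⟩ ha hb
    rw [Finset.mem_product, Finset.mem_singleton] at ha hb
    exact hxy (ha.1.symm.trans hb.1))]
  have hcards : ∀ r ∈ Finset.Icc i₀ m,
      ({r} ×ˢ Finset.Ico (r + nthPart nu r) (r + nthPart lam r)).card
        = nthPart lam r - nthPart nu r := by
    intro r _
    rw [Finset.card_product, Finset.card_singleton, Nat.card_Ico, one_mul]
    omega
  rw [Finset.sum_congr rfl hcards]
  exact (telescope (nthPart lam) (nthPart nu) i₀ m hS.h2 hS.hmid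
    (fun j hj hj' => le_of_lt (hS.hrow j hj hj'))).1

lemma strip_nonempty (hS : Strip lam nu i₀ m) : (skewDiag lam nu).Nonempty :=
  ⟨(m, m + nthPart nu m), (hS.mem_skew_strip m _).mpr ⟨hS.h2, le_rfl, le_rfl, by
    have := hS.hm; omega⟩⟩

lemma strip_injOn (hS : Strip lam nu i₀ m) : Set.InjOn diagVal (skewDiag lam nu) := by
  rintro ⟨i, j⟩ hc ⟨i', j'⟩ hd heq
  rw [hS.mem_skew_strip] at hc hd
  unfold diagVal at heq
  simp only at heq
  obtain ⟨hc1, hc2, hc3, hc4⟩ := hc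
  obtain ⟨hd1, hd2, hd3, hd4⟩ := hd
  rcases lt_trichotomy i i' with h | h | h
  · exfalso
    have e1 : nthPart nu i = nthPart lam (i + 1) := hS.hmid i hc1 (by omega)
    have e2 : nthPart lam i' ≤ nthPart lam (i + 1) :=
      nthPart_antitone lam (by omega) (by omega)
    omega
  · subst h
    have : j = j' := by omega
    rw [this]
  · exfalso
    have e1 : nthPart nu i' = nthPart lam (i' + 1) := hS.hmid i' hd1 (by omega)
    have e2 : nthPart lam i ≤ nthPart lam (i' + 1) :=
      nthPart_antitone lam (by omega) (by omega)
    omega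

lemma strip_tail (hS : Strip lam nu i₀ m) (h0 : nthPart nu m = 0) : IsTail (skewDiag lam nu) (m, m) := by
  constructor
  · exact (hS.mem_skew_strip m m).mpr ⟨hS.h2, le_rfl, by omega, by have := hS.hm; omega⟩
  · rintro ⟨i, j⟩ hd
    rw [hS.mem_skew_strip] at hd
    unfold diagVal
    simp only
    omega

end Strip

lemma cellAdj_symm : Symmetric CellAdj := by
  rintro ⟨a, b⟩ ⟨c, d⟩ h
  unfold CellAdj at *
  simp only at *
  tauto

lemma step_symm (E : Set (ℕ × ℕ)) :
    Symmetric (fun x y => CellAdj x y ∧ x ∈ E ∧ y ∈ E) :=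
  fun _ _ h => ⟨cellAdj_symm h.1, h.2.2, h.2.1⟩

lemma horiz_path (E : Set (ℕ × ℕ)) (i a : ℕ) : ∀ b, a ≤ b →
    (∀ c, a ≤ c → c ≤ b → (i, c) ∈ E) →
    Relation.ReflTransGen (fun x y => CellAdj x y ∧ x ∈ E ∧ y ∈ E) (i, b) (i, a) := by
  intro b hb
  induction b, hb using Nat.le_induction with
  | base => intro _; exact Relation.ReflTransGen.refl
  | succ n hn ih =>
    intro hall
    refine Relation.ReflTransGen.head ?_ (ih (fun c hc hc' => hall c hc (by omega)))
    exact ⟨Or.inl ⟨rfl, Or.inr rfl⟩, hall (n + 1) (by omega) le_rfl, hall n hn (by omega)⟩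

namespace Strip

lemma strip_connected {lam nu : Finset ℕ} {i₀ m : ℕ} (hS : Strip lam nu i₀ m) :
    EdgeConnected (skewDiag lam nu) := by
  set E := skewDiag lam nu with hE
  set anchor : ℕ × ℕ := (i₀, i₀ + nthPart nu i₀) with hanchor
  have hsymm : Symmetric (Relation.ReflTransGen (fun x y => CellAdj x y ∧ x ∈ E ∧ y ∈ E)) :=
    fun a b h => (@Relation.ReflTransGen.stdSymm _ _ ⟨fun x y h => step_symm E h⟩).symm a b h
  have key : ∀ i, i₀ ≤ i → i ≤ m → ∀ j, (i, j) ∈ E →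
      Relation.ReflTransGen (fun x y => CellAdj x y ∧ x ∈ E ∧ y ∈ E) (i, j) anchor := by
    intro i hi
    induction i, hi using Nat.le_induction with
    | base =>
      intro _ j hj
      rw [hS.mem_skew_strip] at hj
      exact horiz_path E i₀ (i₀ + nthPart nu i₀) j hj.2.2.1
        (fun c hc hc' => (hS.mem_skew_strip i₀ c).mpr ⟨le_rfl, hS.h2, hc, by omega⟩)
    | succ n hn ih =>
      intro hnm j hj
      rw [hS.mem_skew_strip] at hj
      obtain ⟨h1, h2, h3, h4⟩ := hj
      have hNn : nthPart nu n = nthPart lam (n + 1) := hS.hmid n hn (by omega)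
      have hrow1 : nthPart nu (n + 1) < nthPart lam (n + 1) := hS.hrow (n + 1) h1 h2
      have hrown : nthPart nu n < nthPart lam n := hS.hrow n hn (by omega)
      -- right end of row n+1
      set re : ℕ := n + nthPart lam (n + 1) with hre
      have hmem_re : (n + 1, re) ∈ E := (hS.mem_skew_strip _ _).mpr
        ⟨h1, h2, by omega, by omega⟩
      have hmem_up : (n, re) ∈ E := (hS.mem_skew_strip _ _).mpr
        ⟨hn, by omega, by omega, by omega⟩
      have p1 : Relation.ReflTransGen (fun x y => CellAdj x y ∧ x ∈ E ∧ y ∈ E)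
          (n + 1, j) (n + 1, re) := by
        apply hsymm
        apply horiz_path E (n + 1) j re (by omega)
        intro c hc hc'
        exact (hS.mem_skew_strip _ _).mpr ⟨h1, h2, by omega, by omega⟩
      have p2 : Relation.ReflTransGen (fun x y => CellAdj x y ∧ x ∈ E ∧ y ∈ E)
          (n + 1, re) (n, re) :=
        Relation.ReflTransGen.single
          ⟨Or.inr ⟨rfl, Or.inr rfl⟩, hmem_re, hmem_up⟩
      exact (p1.trans p2).trans (ih (by omega) re hmem_up)
  intro c hc d hd
  obtain ⟨ci, cj⟩ := c
  obtain ⟨di, dj⟩ := d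
  have hc' := (hS.mem_skew_strip ci cj).mp hc
  have hd' := (hS.mem_skew_strip di dj).mp hd
  exact (key ci hc'.1 hc'.2.1 cj hc).trans (hsymm (key di hd'.1 hd'.2.1 dj hd))

end Strip

lemma cross_or_stay {E : Set (ℕ × ℕ)} {c d : ℕ × ℕ}
    (h : Relation.ReflTransGen (fun x y => CellAdj x y ∧ x ∈ E ∧ y ∈ E) c d)
    (j : ℕ) (hc : c.1 ≤ j) :
    d.1 ≤ j ∨ ∃ x y : ℕ × ℕ, x ∈ E ∧ y ∈ E ∧ x.1 = j ∧ y.1 = j + 1 ∧ x.2 = y.2 := by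
  induction h with
  | refl => exact Or.inl hc
  | @tail b d2 hpath hstep ih =>
    rcases ih with hb | hcross
    · obtain ⟨hadj, hbE, hdE⟩ := hstep
      rcases Nat.lt_or_ge j d2.1 with h1 | h1
      · right
        rcases hadj with ⟨hr, _⟩ | ⟨hcol, hrow⟩
        · exfalso; omega
        · rcases hrow with h2 | h2
          · exact ⟨b, d2, hbE, hdE, by omega, by omega, hcol⟩
          · exfalso; omega
      · exact Or.inl h1
    · exact Or.inr hcross

lemma analysis {lam nu : Finset ℕ}
    (hsub : shiftedDiagram nu ⊆ shiftedDiagram lam)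
    (hne : (skewDiag lam nu).Nonempty)
    (hconn : EdgeConnected (skewDiag lam nu))
    (hinj : Set.InjOn diagVal (skewDiag lam nu)) :
    ∃ i₀ m, Strip lam nu i₀ m := by
  set E := skewDiag lam nu with hE
  have hfin : E.Finite := skew_finite lam nu
  set rows : Finset ℕ := hfin.toFinset.image Prod.fst with hrows
  have hrows_ne : rows.Nonempty := by
    obtain ⟨c, hc⟩ := hne
    exact ⟨c.1, Finset.mem_image.mpr ⟨c, hfin.mem_toFinset.mpr hc, rfl⟩⟩
  set i₀ := rows.min' hrows_ne with hi₀
  set m := rows.max' hrows_ne with hm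
  have hcell_row : ∀ i j, (i, j) ∈ E → i₀ ≤ i ∧ i ≤ m := by
    intro i j hij
    have : i ∈ rows := Finset.mem_image.mpr ⟨(i, j), hfin.mem_toFinset.mpr hij, rfl⟩
    exact ⟨rows.min'_le i this, rows.le_max' i this⟩
  have hrow_cell : ∀ i ∈ rows, ∃ j, (i, j) ∈ E := by
    intro i hi
    obtain ⟨c, hc, hc1⟩ := Finset.mem_image.mp hi
    exact ⟨c.2, by
      have hcE := hfin.mem_toFinset.mp hc
      rwa [← hc1, Prod.mk.eta]⟩
  have hle : ∀ i, 1 ≤ i → nthPart nu i ≤ nthPart lam i :=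
    fun i hi => le_of_subset_diagram hsub hi
  -- rows outside [i₀, m] are empty
  have hout : ∀ j, 1 ≤ j → (j < i₀ ∨ m < j) → nthPart nu j = nthPart lam j := by
    intro j hj hcase
    have h1 := hle j hj
    by_contra hcon
    have hmem : (j, j + nthPart nu j) ∈ E := (mem_skew lam nu j _).mpr ⟨hj, le_rfl, by omega⟩
    have := hcell_row j _ hmem
    omega
  -- row i₀ and row m are nonempty, all rows ≥ 1
  have hi₀_cell := hrow_cell i₀ (rows.min'_mem hrows_ne)
  have hm_cell := hrow_cell m (rows.max'_mem hrows_ne)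
  obtain ⟨j₀, hj₀⟩ := hi₀_cell
  obtain ⟨jm, hjm⟩ := hm_cell
  have hi₀_pos : 1 ≤ i₀ := ((mem_skew lam nu i₀ j₀).mp hj₀).1
  have hi₀m : i₀ ≤ m := (hcell_row i₀ j₀ hj₀).2
  have hrow_i₀ : nthPart nu i₀ < nthPart lam i₀ := by
    have := (mem_skew lam nu i₀ j₀).mp hj₀
    omega
  have hrow_m : nthPart nu m < nthPart lam m := by
    have := (mem_skew lam nu m jm).mp hjm
    omega
  -- no empty rows inside [i₀, m]
  have hnogap : ∀ j, i₀ ≤ j → j ≤ m → nthPart nu j < nthPart lam j := by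
    intro j hj1 hj2
    by_contra hcon
    have hempty : ∀ x : ℕ × ℕ, x ∈ E → x.1 ≠ j := by
      rintro ⟨a, b⟩ hx heq
      have heq' : a = j := heq
      subst heq'
      have h1 := (mem_skew lam nu a b).mp hx
      have h2 := hle a h1.1
      omega
    have hneq_i₀ : i₀ ≠ j := fun h => hempty _ hj₀ (by rw [← h])
    have hneq_m : m ≠ j := fun h => hempty _ hjm (by rw [← h])
    rcases cross_or_stay (hconn _ hj₀ _ hjm) j (by simp; omega) with h | ⟨x, y, hx, hy, hx1, _, _⟩
    · simp only at h; omega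
    · exact hempty x hx hx1
  -- the middle rows condition
  have hmid : ∀ j, i₀ ≤ j → j < m → nthPart nu j = nthPart lam (j + 1) := by
    intro j hj1 hj2
    have hrj : nthPart nu j < nthPart lam j := hnogap j hj1 (by omega)
    have hrj1 : nthPart nu (j + 1) < nthPart lam (j + 1) := hnogap (j + 1) (by omega) (by omega)
    have hLpos : 0 < nthPart lam (j + 1) := by omega
    -- first: nthPart lam (j+1) ≤ nthPart nu j via injectivity
    have hge : nthPart lam (j + 1) ≤ nthPart nu j := by
      by_contra hcon
      have hLlt : nthPart lam (j + 1) < nthPart lam j :=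
        nthPart_strictAnti lam (by omega) (by omega) hLpos
      have hu : (j, j + nthPart lam (j + 1) - 1) ∈ E :=
        (mem_skew lam nu j _).mpr ⟨by omega, by omega, by omega⟩
      have hw : (j + 1, (j + 1) + nthPart lam (j + 1) - 1) ∈ E :=
        (mem_skew lam nu (j + 1) _).mpr ⟨by omega, by omega, by omega⟩
      have heq : diagVal (j, j + nthPart lam (j + 1) - 1)
          = diagVal (j + 1, (j + 1) + nthPart lam (j + 1) - 1) := by
        unfold diagVal
        simp only
        omega
      have := hinj hu hw heq
      simp only [Prod.mk.injEq] at this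
      omega
    -- second: nthPart nu j ≤ nthPart lam (j+1) via connectivity crossing
    have hle2 : nthPart nu j ≤ nthPart lam (j + 1) := by
      rcases cross_or_stay (hconn _ hj₀ _ hjm) j (by simp; omega)
        with h | ⟨x, y, hx, hy, hx1, hy1, hxy⟩
      · simp only at h; omega
      · have h1 := (mem_skew lam nu x.1 x.2).mp (by rwa [Prod.mk.eta])
        have h2 := (mem_skew lam nu y.1 y.2).mp (by rwa [Prod.mk.eta])
        rw [hx1] at h1
        rw [hy1, ← hxy] at h2
        omega
    omega
  exact ⟨i₀, m, ⟨hi₀_pos, hi₀m, fun j hj hlt => hout j hj (Or.inl hlt),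
    fun j hgt => hout j (by omega) (Or.inr hgt), hmid, hrow_m⟩⟩

lemma strip_single {lam nu : Finset ℕ} {i₀ m : ℕ} (hlam : IsStrictPartition lam)
    (hnu : IsStrictPartition nu) (hS : Strip lam nu i₀ m) :
    IsRemovableSingleRibbon lam nu (nthPart lam i₀ - nthPart nu m) :=
  ⟨hlam, hnu, subset_diagram_of_le hS.hle, hS.strip_ncard, hS.strip_connected, hS.strip_injOn⟩

lemma single_case {lam nu : Finset ℕ} {k : ℕ} (hk : 1 ≤ k)
    (hrib : IsRemovableSingleRibbon lam nu k) :
    k ∈ lam ∨ ∃ p ∈ lam, k < p ∧ p - k ∉ lam := by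
  obtain ⟨hlam, hnu, hsub, hcard, hconn, hinj⟩ := hrib
  have hne : (skewDiag lam nu).Nonempty := by
    rw [Set.nonempty_iff_ne_empty]
    intro h
    rw [h, Set.ncard_empty] at hcard
    omega
  obtain ⟨i₀, m, hS⟩ := analysis hsub hne hconn hinj
  have hk_eq : k = nthPart lam i₀ - nthPart nu m := by rw [← hcard, hS.strip_ncard]
  have hLm : nthPart nu m < nthPart lam m := hS.hm
  have hLi₀ : nthPart lam m ≤ nthPart lam i₀ := nthPart_antitone lam hS.h1 hS.h2
  have hLpos : 0 < nthPart lam i₀ := by omega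
  have hmem_p : nthPart lam i₀ ∈ lam := nthPart_mem lam hS.h1 hLpos
  rcases Nat.eq_zero_or_pos (nthPart nu m) with h0 | h0
  · left
    have : k = nthPart lam i₀ := by omega
    rwa [this]
  · right
    refine ⟨nthPart lam i₀, hmem_p, by omega, ?_⟩
    have hpk : nthPart lam i₀ - k = nthPart nu m := by omega
    rw [hpk]
    intro hmem
    obtain ⟨ht1, ht2, ht3⟩ := mem_nthPart lam h0 hmem
    set t := rk lam (nthPart nu m) with htdef
    have hNm1 : nthPart nu (m + 1) = nthPart lam (m + 1) := hS.hgt (m + 1) (by omega)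
    have hlt1 : nthPart lam (m + 1) < nthPart nu m := by
      rcases Nat.eq_zero_or_pos (nthPart nu (m + 1)) with hz | hz
      · omega
      · have hm1 : 1 ≤ m := by have := hS.h1; have := hS.h2; omega
        have := nthPart_strictAnti nu hm1 (by omega) hz
        omega
    rcases le_or_gt t m with htm | htm
    · have := nthPart_antitone lam ht1 htm
      omega
    · have := nthPart_antitone lam (show 1 ≤ m + 1 by omega) (show m + 1 ≤ t by omega)
      omega

lemma double_case {lam nu : Finset ℕ} {k : ℕ}
    (hrib : IsRemovableDoubleRibbon lam nu k) :
    ∃ a ∈ lam, ∃ b ∈ lam, a ≠ b ∧ a + b = k := by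
  obtain ⟨hcard, R, S, hlam, hnu, hsub, hdisj, hunion, hRne, hRconn, hRinj, hSne, hSconn,
    hSinj, hcardle, ⟨a, hRtail⟩, ⟨b, hStail⟩, mu, hmu, hmueq⟩ := hrib
  have hRsubL : R ⊆ shiftedDiagram lam := by
    intro x hx
    have hxE : x ∈ skewDiag lam nu := by rw [← hunion]; exact Or.inl hx
    exact hxE.1
  have hReq : skewDiag lam mu = R := by
    unfold skewDiag
    rw [hmueq]
    ext x
    simp only [Set.mem_diff]
    constructor
    · rintro ⟨h1, h2⟩
      by_contra h3
      exact h2 ⟨h1, h3⟩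
    · intro hx
      exact ⟨hRsubL hx, fun h => h.2 hx⟩
  have hmusub : shiftedDiagram mu ⊆ shiftedDiagram lam := by
    rw [hmueq]; exact Set.diff_subset
  obtain ⟨i₀, m, hSR⟩ := analysis hmusub (by rw [hReq]; exact hRne)
    (by rw [hReq]; exact hRconn) (by rw [hReq]; exact hRinj)
  have haR : (a, a) ∈ skewDiag lam mu := by rw [hReq]; exact hRtail.1
  have haS := (hSR.mem_skew_strip a a).mp haR
  have hMm : nthPart mu m = 0 := by
    have h1 := nthPart_antitone mu (show 1 ≤ a by have := hSR.h1; omega) haS.2.1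
    have h2 := haS.2.2.1
    omega
  have hRcard : R.ncard = nthPart lam i₀ := by
    have h := hSR.strip_ncard
    rw [hReq, hMm] at h
    simpa using h
  have hLpos : 0 < nthPart lam i₀ := by
    have h1 := hSR.hm
    have h2 := nthPart_antitone lam hSR.h1 hSR.h2
    omega
  have hamem : nthPart lam i₀ ∈ lam := nthPart_mem lam hSR.h1 hLpos
  have hmu_mem : ∀ x, x ∈ mu → x ∈ lam ∧ x ≠ nthPart lam i₀ := by
    intro x hx
    have hx1 : 1 ≤ x := hmu x hx
    obtain ⟨ht1, ht2, ht3⟩ := mem_nthPart mu hx1 hx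
    set t := rk mu x with htdef
    rcases Nat.lt_or_ge t i₀ with h | h
    · have hxL : x = nthPart lam t := by rw [← ht3, hSR.hlt t ht1 h]
      have hst := nthPart_strictAnti lam ht1 h hLpos
      exact ⟨hxL ▸ nthPart_mem lam ht1 (by omega), by omega⟩
    · have htm : t < m := by
        by_contra hcon
        have := nthPart_antitone mu (show 1 ≤ m by have := hSR.h1; omega)
          (show m ≤ t by omega)
        omega
      have hxL : x = nthPart lam (t + 1) := by rw [← ht3, hSR.hmid t h htm]
      have hst := nthPart_strictAnti lam hSR.h1 (show i₀ < t + 1 by omega)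
        (show 0 < nthPart lam (t + 1) by omega)
      exact ⟨hxL ▸ nthPart_mem lam (by omega) (by omega), by omega⟩
  have hsubnumu : shiftedDiagram nu ⊆ shiftedDiagram mu := by
    intro x hx
    rw [hmueq]
    refine ⟨hsub hx, fun hxR => ?_⟩
    have hxE : x ∈ skewDiag lam nu := by rw [← hunion]; exact Or.inl hxR
    exact hxE.2 hx
  have hSeq : skewDiag mu nu = S := by
    ext x
    constructor
    · rintro ⟨hx1, hx2⟩
      have hx1' := hx1
      rw [hmueq] at hx1'
      have hxE : x ∈ skewDiag lam nu := ⟨hx1'.1, hx2⟩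
      rw [← hunion] at hxE
      rcases hxE with h | h
      · exact absurd h hx1'.2
      · exact h
    · intro hx
      have hxE : x ∈ skewDiag lam nu := by rw [← hunion]; exact Or.inr hx
      have hxR : x ∉ R := fun h => Set.disjoint_left.mp hdisj h hx
      refine ⟨?_, hxE.2⟩
      rw [hmueq]
      exact ⟨hxE.1, hxR⟩
  obtain ⟨i₁, m₁, hSS⟩ := analysis hsubnumu (by rw [hSeq]; exact hSne)
    (by rw [hSeq]; exact hSconn) (by rw [hSeq]; exact hSinj)
  have hbR : (b, b) ∈ skewDiag mu nu := by rw [hSeq]; exact hStail.1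
  have hbS := (hSS.mem_skew_strip b b).mp hbR
  have hNm₁ : nthPart nu m₁ = 0 := by
    have h1 := nthPart_antitone nu (show 1 ≤ b by have := hSS.h1; omega) hbS.2.1
    have h2 := hbS.2.2.1
    omega
  have hScard : S.ncard = nthPart mu i₁ := by
    have h := hSS.strip_ncard
    rw [hSeq, hNm₁] at h
    simpa using h
  have hMpos : 0 < nthPart mu i₁ := by
    have h1 := hSS.hm
    have h2 := nthPart_antitone mu hSS.h1 hSS.h2
    omega
  have hbmem' : nthPart mu i₁ ∈ mu := nthPart_mem mu hSS.h1 hMpos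
  obtain ⟨hbmem, hbne⟩ := hmu_mem _ hbmem'
  have hfinR : R.Finite := (shifted_finite lam).subset hRsubL
  have hfinS : S.Finite := hSeq ▸ skew_finite mu nu
  have hksum : k = nthPart lam i₀ + nthPart mu i₁ := by
    rw [← hcard, ← hunion, Set.ncard_union_eq hdisj hfinR hfinS, hRcard, hScard]
  exact ⟨nthPart lam i₀, hamem, nthPart mu i₁, hbmem, fun h => hbne h.symm, by omega⟩

lemma strip_erase {lam : Finset ℕ} (hlam : IsStrictPartition lam) {p : ℕ} (hp : p ∈ lam) :
    Strip lam (lam.erase p) (rk lam p) lam.card := by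
  have hp1 : 1 ≤ p := hlam p hp
  obtain ⟨hr1, hr2, hr3⟩ := mem_nthPart lam hp1 hp
  refine ⟨hr1, hr2, ?_, ?_, ?_, ?_⟩
  · intro j hj hlt; exact nthPart_erase_lt lam hp hj hlt
  · intro j hgt
    rw [nthPart_erase_ge lam hp hp1 (by omega)]
    rw [nthPart_eq_zero lam (show lam.card < j + 1 by omega),
      nthPart_eq_zero lam (show lam.card < j by omega)]
  · intro j hj1 _; exact nthPart_erase_ge lam hp hp1 hj1
  · rw [nthPart_erase_ge lam hp hp1 hr2, nthPart_eq_zero lam (by omega)]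
    exact nthPart_pos lam hlam (by omega) le_rfl

lemma ribbon_erase {lam : Finset ℕ} (hlam : IsStrictPartition lam) {p : ℕ} (hp : p ∈ lam) :
    IsRemovableSingleRibbon lam (lam.erase p) p := by
  have hS := strip_erase hlam hp
  have h := strip_single hlam (fun x hx => hlam x (Finset.mem_of_mem_erase hx)) hS
  have e1 : nthPart lam (rk lam p) = p := (mem_nthPart lam (hlam p hp) hp).2.2
  have e2 : nthPart (lam.erase p) lam.card = 0 := by
    apply nthPart_eq_zero
    rw [Finset.card_erase_of_mem hp]
    have : 1 ≤ lam.card := Finset.card_pos.mpr ⟨p, hp⟩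
    omega
  rwa [e1, e2, Nat.sub_zero] at h

lemma ribbon_replace {lam : Finset ℕ} (hlam : IsStrictPartition lam) {p k : ℕ}
    (hp : p ∈ lam) (hkp : k < p) (hq : p - k ∉ lam) (hqpos : 1 ≤ p - k) :
    IsRemovableSingleRibbon lam (insert (p - k) (lam.erase p)) k := by
  set q := p - k with hqdef
  set nu := insert q (lam.erase p) with hnudef
  have hp1 : 1 ≤ p := hlam p hp
  obtain ⟨hr1, hr2, hr3⟩ := mem_nthPart lam hp1 hp
  set i₀ := rk lam p with hi₀def
  set m := rk lam q with hmdef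
  have hqe : q ∉ lam.erase p := fun h => hq (Finset.mem_of_mem_erase h)
  have hqm1 : rk (lam.erase p) q = m - 1 := by
    have h := filter_erase_card lam p q hp
    rw [if_pos (by omega)] at h
    exact h
  have hqm2 : 1 ≤ m :=
    Finset.card_pos.mpr ⟨p, Finset.mem_filter.mpr ⟨hp, by omega⟩⟩
  have hi₀m : i₀ ≤ m := rk_mono lam (by omega)
  have hNm : nthPart nu m = q := by
    have h := nthPart_insert_eq (lam.erase p) hqe (by omega)
    rwa [hqm1, Nat.sub_add_cancel hqm2] at h
  have hS : Strip lam nu i₀ m := by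
    refine ⟨hr1, hi₀m, ?_, ?_, ?_, ?_⟩
    · intro j hj1 hj2
      rw [nthPart_insert_lt (lam.erase p) hqe hj1 (by omega),
        nthPart_erase_lt lam hp hj1 hj2]
    · intro j hgt
      rw [nthPart_insert_gt (lam.erase p) hqe (by omega) (by omega)]
      rw [nthPart_erase_ge lam hp hp1 (by omega)]
      congr 1
      omega
    · intro j hj1 hj2
      rw [nthPart_insert_lt (lam.erase p) hqe (by omega) (by omega),
        nthPart_erase_ge lam hp hp1 hj1]
    · rw [hNm]
      have h2 : q + 1 ≤ nthPart lam m := by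
        rw [le_nthPart_iff lam m (q + 1) (by omega) (by omega)]
        have h3 := rk_succ_of_not_mem lam hq
        unfold rk at *
        omega
      omega
  have hnustrict : IsStrictPartition nu := by
    intro x hx
    rcases Finset.mem_insert.mp hx with h | h
    · omega
    · exact hlam x (Finset.mem_of_mem_erase h)
  have h := strip_single hlam hnustrict hS
  have hfin : nthPart lam i₀ - nthPart nu m = k := by
    rw [hr3, hNm]
    omega
  rwa [hfin] at h

lemma ribbon_double {lam : Finset ℕ} (hlam : IsStrictPartition lam) {a b : ℕ}
    (ha : a ∈ lam) (hb : b ∈ lam) (hab : b < a) :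
    IsRemovableDoubleRibbon lam ((lam.erase a).erase b) (a + b) := by
  set mu := lam.erase a with hmu
  set nu := mu.erase b with hnu
  have hmustrict : IsStrictPartition mu := fun x hx => hlam x (Finset.mem_of_mem_erase hx)
  have hnustrict : IsStrictPartition nu := fun x hx => hmustrict x (Finset.mem_of_mem_erase hx)
  have hbmu : b ∈ mu := Finset.mem_erase.mpr ⟨by omega, hb⟩
  have hSR := strip_erase hlam ha
  have hSS := strip_erase hmustrict hbmu
  set R := skewDiag lam mu with hR
  set S := skewDiag mu nu with hS'
  have hsub1 : shiftedDiagram mu ⊆ shiftedDiagram lam := subset_diagram_of_le hSR.hle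
  have hsub2 : shiftedDiagram nu ⊆ shiftedDiagram mu := subset_diagram_of_le hSS.hle
  have hfinR : R.Finite := skew_finite lam mu
  have hfinS : S.Finite := skew_finite mu nu
  have hdisj : Disjoint R S := by
    rw [Set.disjoint_left]
    rintro x hxR hxS
    exact hxR.2 hxS.1
  have hunion : R ∪ S = skewDiag lam nu := Set.diff_union_diff_cancel hsub1 hsub2
  have e1 : nthPart lam (rk lam a) = a := (mem_nthPart lam (hlam a ha) ha).2.2
  have e2 : nthPart mu lam.card = 0 := by
    apply nthPart_eq_zero
    rw [hmu, Finset.card_erase_of_mem ha]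
    have : 1 ≤ lam.card := Finset.card_pos.mpr ⟨a, ha⟩
    omega
  have e3 : nthPart mu (rk mu b) = b := (mem_nthPart mu (hmustrict b hbmu) hbmu).2.2
  have e4 : nthPart nu mu.card = 0 := by
    apply nthPart_eq_zero
    rw [hnu, Finset.card_erase_of_mem hbmu]
    have : 1 ≤ mu.card := Finset.card_pos.mpr ⟨b, hbmu⟩
    omega
  have hRcard : R.ncard = a := by rw [hR, hSR.strip_ncard, e1, e2, Nat.sub_zero]
  have hScard : S.ncard = b := by rw [hS', hSS.strip_ncard, e3, e4, Nat.sub_zero]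
  refine ⟨?_, R, S, hlam, hnustrict, hsub2.trans hsub1, hdisj, hunion,
    hSR.strip_nonempty, hSR.strip_connected, hSR.strip_injOn,
    hSS.strip_nonempty, hSS.strip_connected, hSS.strip_injOn,
    by rw [hRcard, hScard]; omega,
    ⟨lam.card, hSR.strip_tail e2⟩, ⟨mu.card, hSS.strip_tail e4⟩,
    mu, hmustrict, ?_⟩
  · rw [← hunion, Set.ncard_union_eq hdisj hfinR hfinS, hRcard, hScard]
  · rw [hR]
    unfold skewDiag
    rw [Set.diff_diff_cancel_left hsub1]

end S4


/-- A strict partition `λ` admits no removable `k`-ribbon (is a shifted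
`k`-core) iff: `k` is not a part; for every part `p > k`, `p - k` is also a part; and no
two distinct parts sum to `k`. -/
theorem stmt4 (k : ℕ) (hk : 1 ≤ k) (lam : Finset ℕ) (hlam : IsStrictPartition lam) :
    (¬∃ nu : Finset ℕ, IsRemovableRibbon lam nu k) ↔
      (k ∉ lam ∧ (∀ p ∈ lam, k < p → p - k ∈ lam) ∧
        ∀ a ∈ lam, ∀ b ∈ lam, a ≠ b → a + b ≠ k) := by
  constructor
  · intro hno
    refine ⟨?_, ?_, ?_⟩
    · intro hkmem
      exact hno ⟨lam.erase k, Or.inl (S4.ribbon_erase hlam hkmem)⟩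
    · intro p hp hkp
      by_contra hq
      exact hno ⟨insert (p - k) (lam.erase p),
        Or.inl (S4.ribbon_replace hlam hp hkp hq (by omega))⟩
    · intro a ha b hb hab hsum
      rcases Nat.lt_or_ge b a with h | h
      · exact hno ⟨(lam.erase a).erase b,
          Or.inr (hsum ▸ S4.ribbon_double hlam ha hb h)⟩
      · have h' : a < b := by omega
        have hsum' : b + a = k := by omega
        exact hno ⟨(lam.erase b).erase a,
          Or.inr (hsum' ▸ S4.ribbon_double hlam hb ha h')⟩
  · rintro ⟨hA, hB, hC⟩ ⟨nu, hrib⟩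
    rcases hrib with hs | hd
    · rcases S4.single_case hk hs with h | ⟨p, hp, hkp, hq⟩
      · exact hA h
      · exact hq (hB p hp hkp)
    · obtain ⟨a, ha, b, hb, hab, hsum⟩ := S4.double_case hd
      exact hC a ha b hb hab hsum
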